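/- Let q be an odd prime power with q ≡ 3 (mod 4). In the finite field F_q, the number of elements x such that x is a nonzero nonsquare and x+1 is a nonzero square equals (q-3)/4, and the number of x such that x is a nonzero square and x+1 is a nonzero nonsquare equals (q+1)/4. -/

import Mathlib

open Finset

private lemma char_sum_aux (F : Type*) [Field F] [Fintype F] [DecidableEq F]
    (hF2 : ringChar F ≠ 2) :
    (∑ x ∈ (univ \ {0, -1} : Finset F), (quadraticChar F x : ℤ))
        = 0 - quadraticChar F 0 - quadraticChar F (-1) ∧
    (∑ x ∈ (univ \ {0, -1} : Finset F), (quadraticChar F (x + 1) : ℤ)) = -1 ∧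
    (∑ x ∈ (univ \ {0, -1} : Finset F), (quadraticChar F x * quadraticChar F (x + 1) : ℤ)) = -1 := by
  have hne : (0 : F) ≠ -1 := by
    intro h
    exact one_ne_zero (by linear_combination h)
  have hsum0 : ∑ x : F, (quadraticChar F x : ℤ) = 0 := quadraticChar_sum_zero hF2
  have hSsum : ∀ f : F → ℤ, (∑ x ∈ (univ \ {0, -1} : Finset F), f x)
      = (∑ x : F, f x) - ∑ x ∈ ({0, -1} : Finset F), f x := by
    intro f
    have h := Finset.sum_sdiff (f := f) (subset_univ ({0, -1} : Finset F))
    linarith [h]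
  refine ⟨?_, ?_, ?_⟩
  · rw [hSsum, hsum0, Finset.sum_pair hne]
    ring
  · rw [hSsum]
    have h1 : ∑ x : F, (quadraticChar F (x + 1) : ℤ) = ∑ x : F, (quadraticChar F x : ℤ) :=
      Fintype.sum_equiv (Equiv.addRight (1 : F)) _ _ (fun x => rfl)
    have hone : (quadraticChar F (1 : F) : ℤ) = 1 := map_one _
    rw [h1, hsum0, Finset.sum_pair hne, show (0 : F) + 1 = 1 by ring,
      show (-1 : F) + 1 = 0 by ring, quadraticChar_zero, hone]
    ring
  · have key : (∑ x ∈ (univ \ {0, -1} : Finset F),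
        (quadraticChar F x * quadraticChar F (x + 1) : ℤ))
        = ∑ y ∈ (univ \ {1, 0} : Finset F), (quadraticChar F y : ℤ) := by
      apply Finset.sum_nbij' (i := fun x => 1 + x⁻¹) (j := fun y => (y - 1)⁻¹)
      · intro x hx
        simp only [mem_sdiff, mem_univ, mem_insert, mem_singleton, true_and, not_or] at hx ⊢
        obtain ⟨hx0, hxm1⟩ := hx
        constructor
        · intro h
          have : x⁻¹ = 0 := by linear_combination h
          exact hx0 (inv_eq_zero.mp this)
        · intro h
          apply hxm1
          have h1 : x⁻¹ = -1 := by linear_combination h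
          rw [← inv_inv x, h1]
          norm_num
      · intro y hy
        simp only [mem_sdiff, mem_univ, mem_insert, mem_singleton, true_and, not_or] at hy ⊢
        obtain ⟨hy1, hy0⟩ := hy
        have hym : y - 1 ≠ 0 := sub_ne_zero.mpr hy1
        refine ⟨inv_ne_zero hym, ?_⟩
        intro h
        apply hy0
        have h1 : y - 1 = -1 := by
          rw [← inv_inv (y - 1), h]
          norm_num
        linear_combination h1
      · intro x hx
        simp only [mem_sdiff, mem_univ, mem_insert, mem_singleton, true_and, not_or] at hx
        simp
      · intro y hy
        simp only [mem_sdiff, mem_univ, mem_insert, mem_singleton, true_and, not_or] at hy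
        have hym : y - 1 ≠ 0 := sub_ne_zero.mpr hy.1
        field_simp
        ring
      · intro x hx
        simp only [mem_sdiff, mem_univ, mem_insert, mem_singleton, true_and, not_or] at hx
        obtain ⟨hx0, hxm1⟩ := hx
        have hx2 : x * (x + 1) = x ^ 2 * (1 + x⁻¹) := by field_simp
        rw [← map_mul, hx2, map_mul, quadraticChar_sq_one' hx0, one_mul]
    rw [key]
    have hne10 : (1 : F) ≠ 0 := one_ne_zero
    have h := Finset.sum_sdiff (f := fun y => (quadraticChar F y : ℤ))
      (subset_univ ({1, 0} : Finset F))
    rw [Finset.sum_pair hne10, quadraticChar_sum_zero hF2] at h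
    have hχ1 : (quadraticChar F (1 : F) : ℤ) = 1 := map_one _
    rw [hχ1, quadraticChar_zero] at h
    linarith [h]

theorem stmt_5 (q : ℕ) (F : Type*) [Field F] [Fintype F]
    (hq : Fintype.card F = q) (hodd : Odd q) (h4 : q % 4 = 3) :
    Nat.card {x : F // (x ≠ 0 ∧ ¬ IsSquare x) ∧ (x + 1 ≠ 0 ∧ IsSquare (x + 1))} =
      (q - 3) / 4 ∧
    Nat.card {x : F // (x ≠ 0 ∧ IsSquare x) ∧ (x + 1 ≠ 0 ∧ ¬ IsSquare (x + 1))} =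
      (q + 1) / 4 := by
  classical
  have hF2 : ringChar F ≠ 2 := by
    intro h
    have h2 := FiniteField.even_card_iff_char_two.mp h
    rw [hq] at h2
    omega
  obtain ⟨hB, hC, hD⟩ := char_sum_aux F hF2
  have hχneg1 : (quadraticChar F (-1 : F) : ℤ) = -1 := by
    rw [quadraticChar_neg_one hF2, hq, ZMod.χ₄_nat_eq_if_mod_four]
    have h2 : q % 2 = 1 := by omega
    simp [h2, h4]
  have hB' : (∑ x ∈ (univ \ {0, -1} : Finset F), (quadraticChar F x : ℤ)) = 1 := by
    rw [hB, quadraticChar_zero, hχneg1]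
    ring
  have hne : (0 : F) ≠ -1 := by
    intro h
    exact one_ne_zero (by linear_combination h)
  have hScard : (univ \ {0, -1} : Finset F).card = q - 2 := by
    rw [Finset.card_sdiff_of_subset (subset_univ _), Finset.card_pair hne, Finset.card_univ, hq]
  have hq3 : 3 ≤ q := by omega
  have main : ∀ (ε : ℤ), ε * ε = 1 →
      ∀ (P : F → Prop) (_ : DecidablePred P),
      (∀ x : F, x ≠ 0 → x + 1 ≠ 0 →
        (1 - ε * quadraticChar F x) * (1 + ε * quadraticChar F (x + 1)) =
          if P x then (4 : ℤ) else 0) →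
      (∀ x : F, P x → x ≠ 0 ∧ x + 1 ≠ 0) →
      (4 : ℤ) * (univ.filter P).card = (q : ℤ) - 1 - 2 * ε := by
    intro ε hε P _ hind hPne
    have hfilter : (univ \ {0, -1} : Finset F).filter P = univ.filter P := by
      ext x
      simp only [mem_filter, mem_sdiff, mem_univ, mem_insert, mem_singleton, true_and,
        not_or]
      constructor
      · tauto
      · intro hx
        refine ⟨⟨(hPne x hx).1, ?_⟩, hx⟩
        intro h
        exact (hPne x hx).2 (by rw [h]; ring)
    have hsum : ∑ x ∈ (univ \ {0, -1} : Finset F),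
        (1 - ε * quadraticChar F x) * (1 + ε * quadraticChar F (x + 1)) =
        4 * ((univ.filter P).card : ℤ) := by
      have hcongr : ∀ x ∈ (univ \ {0, -1} : Finset F),
          (1 - ε * quadraticChar F x) * (1 + ε * quadraticChar F (x + 1)) =
            if P x then (4 : ℤ) else 0 := by
        intro x hx
        simp only [mem_sdiff, mem_univ, mem_insert, mem_singleton, true_and, not_or] at hx
        exact hind x hx.1 (fun h => hx.2 (by linear_combination h))
      rw [Finset.sum_congr rfl hcongr, Finset.sum_ite, Finset.sum_const, Finset.sum_const,
        hfilter]
      simp [mul_comm]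
    have hexp : ∑ x ∈ (univ \ {0, -1} : Finset F),
        (1 - ε * quadraticChar F x) * (1 + ε * quadraticChar F (x + 1)) =
        (((univ \ {0, -1} : Finset F).card : ℤ))
          - ε * (∑ x ∈ (univ \ {0, -1} : Finset F), (quadraticChar F x : ℤ))
          + ε * (∑ x ∈ (univ \ {0, -1} : Finset F), (quadraticChar F (x + 1) : ℤ))
          - (ε * ε) * ∑ x ∈ (univ \ {0, -1} : Finset F),
              (quadraticChar F x * quadraticChar F (x + 1) : ℤ) := by
      have hcard : (((univ \ {0, -1} : Finset F).card : ℤ))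
          = ∑ _x ∈ (univ \ {0, -1} : Finset F), (1 : ℤ) := by simp
      rw [hcard, Finset.mul_sum, Finset.mul_sum, Finset.mul_sum, ← Finset.sum_sub_distrib,
        ← Finset.sum_add_distrib, ← Finset.sum_sub_distrib]
      exact Finset.sum_congr rfl (fun x _ => by ring)
    rw [hexp, hB', hC, hD, hε, hScard] at hsum
    have hcast : ((q - 2 : ℕ) : ℤ) = (q : ℤ) - 2 := by omega
    rw [hcast] at hsum
    linarith
  have hval1 : ∀ x : F, x ≠ 0 → IsSquare x → (quadraticChar F x : ℤ) = 1 :=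
    fun x hx h => (quadraticChar_one_iff_isSquare hx).mpr h
  have hval2 : ∀ x : F, ¬ IsSquare x → (quadraticChar F x : ℤ) = -1 :=
    fun x h => quadraticChar_neg_one_iff_not_isSquare.mpr h
  have h1 : (4 : ℤ) * ((univ.filter (fun x : F =>
      (x ≠ 0 ∧ ¬ IsSquare x) ∧ (x + 1 ≠ 0 ∧ IsSquare (x + 1)))).card : ℤ)
      = (q : ℤ) - 1 - 2 * 1 := by
    refine main 1 (by ring) _ _ ?_ ?_
    · intro x hx0 hx1
      by_cases hsx : IsSquare x <;> by_cases hsy : IsSquare (x + 1)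
      · rw [hval1 x hx0 hsx, if_neg (by tauto)]; ring
      · rw [hval1 x hx0 hsx, if_neg (by tauto)]; ring
      · rw [hval2 x hsx, hval1 _ hx1 hsy, if_pos ⟨⟨hx0, hsx⟩, hx1, hsy⟩]; ring
      · rw [hval2 x hsx, hval2 _ hsy, if_neg (by tauto)]; ring
    · exact fun x hx => ⟨hx.1.1, hx.2.1⟩
  have h2 : (4 : ℤ) * ((univ.filter (fun x : F =>
      (x ≠ 0 ∧ IsSquare x) ∧ (x + 1 ≠ 0 ∧ ¬ IsSquare (x + 1)))).card : ℤ)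
      = (q : ℤ) - 1 - 2 * (-1) := by
    refine main (-1) (by ring) _ _ ?_ ?_
    · intro x hx0 hx1
      by_cases hsx : IsSquare x <;> by_cases hsy : IsSquare (x + 1)
      · rw [hval1 x hx0 hsx, hval1 _ hx1 hsy, if_neg (by tauto)]; ring
      · rw [hval1 x hx0 hsx, hval2 _ hsy, if_pos ⟨⟨hx0, hsx⟩, hx1, hsy⟩]; ring
      · rw [hval2 x hsx, if_neg (by tauto)]; ring
      · rw [hval2 x hsx, if_neg (by tauto)]; ring
    · exact fun x hx => ⟨hx.1.1, hx.2.1⟩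
  have e1 : Nat.card {x : F // (x ≠ 0 ∧ ¬ IsSquare x) ∧ (x + 1 ≠ 0 ∧ IsSquare (x + 1))}
      = (univ.filter (fun x : F =>
        (x ≠ 0 ∧ ¬ IsSquare x) ∧ (x + 1 ≠ 0 ∧ IsSquare (x + 1)))).card := by
    rw [Nat.card_eq_fintype_card]
    exact Fintype.card_subtype _
  have e2 : Nat.card {x : F // (x ≠ 0 ∧ IsSquare x) ∧ (x + 1 ≠ 0 ∧ ¬ IsSquare (x + 1))}
      = (univ.filter (fun x : F =>
        (x ≠ 0 ∧ IsSquare x) ∧ (x + 1 ≠ 0 ∧ ¬ IsSquare (x + 1)))).card := by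
    rw [Nat.card_eq_fintype_card]
    exact Fintype.card_subtype _
  refine ⟨?_, ?_⟩
  · rw [e1]; omega
  · rw [e2]; omega
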